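/- In the Lie algebra sl(3,ℝ) of traceless 3×3 real matrices with bracket [A,B] = AB − BA, consider the basis e₁ = diag(2,−1,−1), e₂ = E₁₂−E₂₁, e₃ = E₁₃−E₃₁, e₄ = E₁₂+E₂₁, e₅ = E₁₃+E₃₁, e₆ = diag(0,−1,1), e₇ = E₂₃+E₃₂, e₈ = E₂₃−E₃₂ (where E_{ij} is the matrix with 1 in entry (i,j) and 0 elsewhere). Set 𝔥 = span(e₈), 𝔪 = span(e₁,…,e₇), and let π : sl(3,ℝ) → 𝔪 be the projection along 𝔥. Identify 𝔪 with ℝ⁷ via the basis e₁,…,e₇ and let φ = a₁·e^{123} + a₂·e^{145} + a₃·e^{167} + a₄·(e^{124}+e^{135}) + a₅·(e^{125}−e^{134}) + a₆·(e^{246}−e^{257}−e^{347}−e^{356}) + a₇·(e^{247}+e^{256}+e^{346}−e^{357}). Then the Koszul differential satisfies dφ(e₃,e₅,e₆,e₇) = −a₃. Consequently, if dφ(e₃,e₅,e₆,e₇) = 0, then (ι_{e₇}φ) ∧ (ι_{e₇}φ) ∧ φ = 0 and φ is not definite. -/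

import Mathlib

set_option synthInstance.maxHeartbeats 1000000
set_option maxHeartbeats 1600000


open AlternatingMap

/-- `ℝ⁷`. -/
abbrev V7 : Type := Fin 7 → ℝ

/-- Wedge product of real-valued alternating forms on `V7`. -/
noncomputable def wedge {m n : ℕ} (φ : V7 [⋀^Fin m]→ₗ[ℝ] ℝ) (ψ : V7 [⋀^Fin n]→ₗ[ℝ] ℝ) :
    V7 [⋀^Fin (m + n)]→ₗ[ℝ] ℝ :=
  ((TensorProduct.lid ℝ ℝ).toLinearMap.compAlternatingMap (φ.domCoprod ψ)).domDomCongr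
    finSumFinEquiv

/-- The dual basis covector `eⁱ` (1-indexed: `i = 1, …, 7`) as a 1-form on `ℝ⁷`. -/
noncomputable def eF (i : ℕ) : V7 [⋀^Fin 1]→ₗ[ℝ] ℝ :=
  AlternatingMap.ofSubsingleton ℝ V7 ℝ (0 : Fin 1) (LinearMap.proj (Fin.ofNat 7 (i - 1 : ℕ)))

/-- `e^{ij} := eⁱ ∧ eʲ` (1-indexed). -/
noncomputable def eW2 (i j : ℕ) : V7 [⋀^Fin 2]→ₗ[ℝ] ℝ := wedge (eF i) (eF j)

/-- `e^{ijk} := eⁱ ∧ eʲ ∧ eᵏ` (1-indexed). -/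
noncomputable def eW3 (i j k : ℕ) : V7 [⋀^Fin 3]→ₗ[ℝ] ℝ := wedge (wedge (eF i) (eF j)) (eF k)

/-- The volume form `e^{1234567} = e¹∧e²∧e³∧e⁴∧e⁵∧e⁶∧e⁷`. -/
noncomputable def vol7 : V7 [⋀^Fin 7]→ₗ[ℝ] ℝ :=
  wedge (wedge (wedge (wedge (wedge (wedge (eF 1) (eF 2)) (eF 3)) (eF 4)) (eF 5)) (eF 6)) (eF 7)

/-- The standard basis vector `eᵢ` of `ℝ⁷` (1-indexed: `i = 1, …, 7`). -/
noncomputable def bV (i : ℕ) : V7 := Pi.single (Fin.ofNat 7 (i - 1 : ℕ)) 1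

/-- Interior product `ι_v φ` of a vector with a 3-form: `(x, y) ↦ φ (v, x, y)`. -/
noncomputable def iprod (v : V7) (φ : V7 [⋀^Fin 3]→ₗ[ℝ] ℝ) : V7 [⋀^Fin 2]→ₗ[ℝ] ℝ :=
  φ.curryLeft v

/-- The 7-form `(ι_v φ) ∧ (ι_v φ) ∧ φ`. -/
noncomputable def G2vol (v : V7) (φ : V7 [⋀^Fin 3]→ₗ[ℝ] ℝ) : V7 [⋀^Fin 7]→ₗ[ℝ] ℝ :=
  wedge (wedge (iprod v φ) (iprod v φ)) φ

/-- A 3-form on `ℝ⁷` is definite if `(ι_vφ)∧(ι_vφ)∧φ ≠ 0` for every nonzero `v`. -/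
def IsDefinite (φ : V7 [⋀^Fin 3]→ₗ[ℝ] ℝ) : Prop :=
  ∀ v : V7, v ≠ 0 → G2vol v φ ≠ 0

/-- The Koszul (Chevalley–Eilenberg) differential of a 3-form `φ` on `𝔪 ≅ ℝ⁷`, where
`c` is the projection `π` onto `𝔪` along `𝔥` followed by the identification `𝔪 ≅ ℝ⁷`:
`dφ(X₀,X₁,X₂,X₃) = Σ_{i<j} (−1)^{i+j} φ(π([Xᵢ,Xⱼ]), Xₖ, Xₗ)`. -/
noncomputable def koszul {n : ℕ} (c : Matrix (Fin n) (Fin n) ℝ →ₗ[ℝ] V7)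
    (φ : V7 [⋀^Fin 3]→ₗ[ℝ] ℝ) (X₀ X₁ X₂ X₃ : Matrix (Fin n) (Fin n) ℝ) : ℝ :=
  -φ ![c (X₀ * X₁ - X₁ * X₀), c X₂, c X₃] + φ ![c (X₀ * X₂ - X₂ * X₀), c X₁, c X₃]
    - φ ![c (X₀ * X₃ - X₃ * X₀), c X₁, c X₂] - φ ![c (X₁ * X₂ - X₂ * X₁), c X₀, c X₃]
    + φ ![c (X₁ * X₃ - X₃ * X₁), c X₀, c X₂] - φ ![c (X₂ * X₃ - X₃ * X₂), c X₀, c X₁]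

/-- The k-form given by a minor determinant. -/
noncomputable def dF {k : ℕ} (p : Fin k → Fin 7) : V7 [⋀^Fin k]→ₗ[ℝ] ℝ :=
  (Matrix.detRowAlternating).compLinearMap (LinearMap.funLeft ℝ ℝ p)

lemma dF_apply {k : ℕ} (p : Fin k → Fin 7) (v : Fin k → V7) :
    dF p v = Matrix.det (Matrix.of fun i j => v i (p j)) := rfl

/-- product multilinear map -/
noncomputable def Pm {k : ℕ} (p : Fin k → Fin 7) : MultilinearMap ℝ (fun _ : Fin k => V7) ℝ :=
  (MultilinearMap.mkPiAlgebra ℝ (Fin k) ℝ).compLinearMap (fun i => LinearMap.proj (p i))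

lemma Pm_apply {k : ℕ} (p : Fin k → Fin 7) (v : Fin k → V7) :
    Pm p v = ∏ i, v i (p i) := by
  simp [Pm]

lemma altern_compLinearMap {ι : Type*} [DecidableEq ι] [Fintype ι]
    {M M₂ N : Type*} [AddCommGroup M] [Module ℝ M] [AddCommGroup M₂] [Module ℝ M₂]
    [AddCommGroup N] [Module ℝ N]
    (m : MultilinearMap ℝ (fun _ : ι => M) N) (g : M₂ →ₗ[ℝ] M) :
    (MultilinearMap.alternatization m).compLinearMap g
      = MultilinearMap.alternatization (m.compLinearMap fun _ => g) := by
  ext v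
  simp [MultilinearMap.alternatization_apply]

lemma dF_eq_alternatization {k : ℕ} (p : Fin k → Fin 7) :
    dF p = MultilinearMap.alternatization (Pm p) := by
  rw [dF, Matrix.detRowAlternating, altern_compLinearMap]
  congr 1

lemma compAlternating_alternatization {ι : Type*} [DecidableEq ι] [Fintype ι]
    {M N N₂ : Type*} [AddCommGroup M] [Module ℝ M]
    [AddCommGroup N] [Module ℝ N] [AddCommGroup N₂] [Module ℝ N₂]
    (g : N →ₗ[ℝ] N₂) (m : MultilinearMap ℝ (fun _ : ι => M) N) :
    g.compAlternatingMap (MultilinearMap.alternatization m)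
      = MultilinearMap.alternatization (g.compMultilinearMap m) := by
  ext v
  simp [MultilinearMap.alternatization_apply, map_sum]

lemma domDomCongr_alternatization {ι ι' : Type*} [DecidableEq ι] [Fintype ι]
    [DecidableEq ι'] [Fintype ι']
    {M N : Type*} [AddCommGroup M] [Module ℝ M] [AddCommGroup N] [Module ℝ N]
    (e : ι ≃ ι') (m : MultilinearMap ℝ (fun _ : ι => M) N) :
    (MultilinearMap.alternatization m).domDomCongr e
      = MultilinearMap.alternatization (m.domDomCongr e) := by
  ext v
  rw [AlternatingMap.domDomCongr_apply, MultilinearMap.alternatization_apply,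
    MultilinearMap.alternatization_apply]
  refine Fintype.sum_equiv e.permCongr _ _ fun σ => ?_
  rw [Equiv.Perm.sign_permCongr]
  congr 1
  simp [MultilinearMap.domDomCongr_apply, Equiv.permCongr_apply]

lemma wedge_dF {m n : ℕ} (p : Fin m → Fin 7) (q : Fin n → Fin 7) :
    wedge (dF p) (dF q) = dF (Fin.append p q) := by
  rw [wedge, dF_eq_alternatization p, dF_eq_alternatization q,
    ← MultilinearMap.domCoprod_alternization, compAlternating_alternatization,
    domDomCongr_alternatization, dF_eq_alternatization]
  congr 1
  refine MultilinearMap.ext fun v => ?_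
  simp only [MultilinearMap.domDomCongr_apply, LinearMap.compMultilinearMap_apply,
    MultilinearMap.domCoprod_apply, LinearEquiv.coe_coe, TensorProduct.lid_tmul,
    Pm_apply, smul_eq_mul]
  rw [Fin.prod_univ_add]
  congr 1
  · exact Finset.prod_congr rfl fun i _ => by
      rw [finSumFinEquiv_apply_left, Fin.append_left]
  · exact Finset.prod_congr rfl fun i _ => by
      rw [finSumFinEquiv_apply_right, Fin.append_right]

lemma wedge_apply {m n : ℕ} (φ : V7 [⋀^Fin m]→ₗ[ℝ] ℝ) (ψ : V7 [⋀^Fin n]→ₗ[ℝ] ℝ)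
    (v : Fin (m + n) → V7) :
    wedge φ ψ v = TensorProduct.lid ℝ ℝ
      (AlternatingMap.domCoprod' (φ ⊗ₜ[ℝ] ψ) fun i => v (finSumFinEquiv i)) := rfl

lemma wedge_add_left {m n : ℕ} (φ₁ φ₂ : V7 [⋀^Fin m]→ₗ[ℝ] ℝ) (ψ : V7 [⋀^Fin n]→ₗ[ℝ] ℝ) :
    wedge (φ₁ + φ₂) ψ = wedge φ₁ ψ + wedge φ₂ ψ := by
  ext v
  simp only [wedge_apply, AlternatingMap.add_apply, TensorProduct.add_tmul, map_add]

lemma wedge_sub_left {m n : ℕ} (φ₁ φ₂ : V7 [⋀^Fin m]→ₗ[ℝ] ℝ) (ψ : V7 [⋀^Fin n]→ₗ[ℝ] ℝ) :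
    wedge (φ₁ - φ₂) ψ = wedge φ₁ ψ - wedge φ₂ ψ := by
  ext v
  simp only [wedge_apply, AlternatingMap.sub_apply, TensorProduct.sub_tmul, map_sub]

lemma wedge_smul_left {m n : ℕ} (r : ℝ) (φ : V7 [⋀^Fin m]→ₗ[ℝ] ℝ) (ψ : V7 [⋀^Fin n]→ₗ[ℝ] ℝ) :
    wedge (r • φ) ψ = r • wedge φ ψ := by
  ext v
  simp only [wedge_apply, AlternatingMap.smul_apply, ← TensorProduct.smul_tmul', map_smul]

lemma wedge_add_right {m n : ℕ} (φ : V7 [⋀^Fin m]→ₗ[ℝ] ℝ) (ψ₁ ψ₂ : V7 [⋀^Fin n]→ₗ[ℝ] ℝ) :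
    wedge φ (ψ₁ + ψ₂) = wedge φ ψ₁ + wedge φ ψ₂ := by
  ext v
  simp only [wedge_apply, AlternatingMap.add_apply, TensorProduct.tmul_add, map_add]

lemma wedge_sub_right {m n : ℕ} (φ : V7 [⋀^Fin m]→ₗ[ℝ] ℝ) (ψ₁ ψ₂ : V7 [⋀^Fin n]→ₗ[ℝ] ℝ) :
    wedge φ (ψ₁ - ψ₂) = wedge φ ψ₁ - wedge φ ψ₂ := by
  ext v
  simp only [wedge_apply, AlternatingMap.sub_apply, TensorProduct.tmul_sub, map_sub]

lemma wedge_smul_right {m n : ℕ} (r : ℝ) (φ : V7 [⋀^Fin m]→ₗ[ℝ] ℝ) (ψ : V7 [⋀^Fin n]→ₗ[ℝ] ℝ) :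
    wedge φ (r • ψ) = r • wedge φ ψ := by
  ext v
  simp only [wedge_apply, AlternatingMap.smul_apply, TensorProduct.tmul_smul, map_smul]

lemma wedge_zero_left {m n : ℕ} (ψ : V7 [⋀^Fin n]→ₗ[ℝ] ℝ) :
    wedge (0 : V7 [⋀^Fin m]→ₗ[ℝ] ℝ) ψ = 0 := by
  ext v
  simp only [wedge_apply, AlternatingMap.zero_apply, TensorProduct.zero_tmul, _root_.map_zero]

lemma wedge_zero_right {m n : ℕ} (φ : V7 [⋀^Fin m]→ₗ[ℝ] ℝ) :
    wedge φ (0 : V7 [⋀^Fin n]→ₗ[ℝ] ℝ) = 0 := by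
  ext v
  simp only [wedge_apply, AlternatingMap.zero_apply, TensorProduct.tmul_zero, _root_.map_zero]

lemma dF_eq_zero {k : ℕ} {p : Fin k → Fin 7} (h : ¬ Function.Injective p) : dF p = 0 := by
  obtain ⟨a, b, hab, hne⟩ := Function.not_injective_iff.mp h
  ext v
  rw [dF_apply, AlternatingMap.zero_apply]
  exact Matrix.det_zero_of_column_eq hne fun i => by simp [hab]

-- lemmas

lemma dF_congr {k : ℕ} {p q : Fin k → Fin 7} (h : p = q) : dF p = dF q := by rw [h]

lemma eF_eq (i : ℕ) : eF i = dF ![Fin.ofNat 7 (i - 1 : ℕ)] := by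
  ext v
  simp [eF, dF_apply, Matrix.det_fin_one]

lemma eW3_eq (i j k : ℕ) :
    eW3 i j k = dF ![Fin.ofNat 7 (i - 1 : ℕ), Fin.ofNat 7 (j - 1 : ℕ), Fin.ofNat 7 (k - 1 : ℕ)] := by
  rw [eW3, eF_eq, eF_eq, eF_eq, wedge_dF, wedge_dF]
  exact dF_congr (by funext x; fin_cases x <;> rfl)

lemma iprod_add (v : V7) (f g : V7 [⋀^Fin 3]→ₗ[ℝ] ℝ) :
    iprod v (f + g) = iprod v f + iprod v g := by
  simp [iprod, AlternatingMap.curryLeft_add]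

lemma iprod_smul (v : V7) (r : ℝ) (f : V7 [⋀^Fin 3]→ₗ[ℝ] ℝ) :
    iprod v (r • f) = r • iprod v f := by
  simp [iprod, AlternatingMap.curryLeft_smul]

lemma iprod_sub (v : V7) (f g : V7 [⋀^Fin 3]→ₗ[ℝ] ℝ) :
    iprod v (f - g) = iprod v f - iprod v g := by
  ext w
  simp [iprod]

lemma iprod_dF (w : V7) (p : Fin 3 → Fin 7) :
    iprod w (dF p) = w (p 0) • dF ![p 1, p 2] - w (p 1) • dF ![p 0, p 2]
      + w (p 2) • dF ![p 0, p 1] := by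
  ext v
  simp [iprod, dF_apply, Matrix.det_fin_three, Matrix.det_fin_two, Matrix.vecHead,
    Matrix.vecTail, Fin.succ_zero_eq_one]
  ring


lemma wedge_neg_left {m n : ℕ} (φ : V7 [⋀^Fin m]→ₗ[ℝ] ℝ) (ψ : V7 [⋀^Fin n]→ₗ[ℝ] ℝ) :
    wedge (-φ) ψ = -wedge φ ψ := by
  rw [eq_neg_iff_add_eq_zero, ← wedge_add_left, neg_add_cancel, wedge_zero_left]

lemma wedge_neg_right {m n : ℕ} (φ : V7 [⋀^Fin m]→ₗ[ℝ] ℝ) (ψ : V7 [⋀^Fin n]→ₗ[ℝ] ℝ) :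
    wedge φ (-ψ) = -wedge φ ψ := by
  rw [eq_neg_iff_add_eq_zero, ← wedge_add_right, neg_add_cancel, wedge_zero_right]

lemma dF_eq_zero' {k : ℕ} {p : Fin k → Fin 7} (h : ¬ Function.Injective p) : dF p = 0 :=
  dF_eq_zero h

/-- In `sl(3,ℝ)` with the indicated basis `e₁,…,e₈`, `𝔥 = span(e₈)`, `𝔪 = span(e₁,…,e₇)`
identified with `ℝ⁷`, the Koszul differential of the generic invariant 3-form `φ`
satisfies `dφ(e₃,e₅,e₆,e₇) = −a₃`; consequently, if `dφ(e₃,e₅,e₆,e₇) = 0` then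
`(ι_{e₇}φ)∧(ι_{e₇}φ)∧φ = 0` and `φ` is not definite. -/
theorem stmt9 (a₁ a₂ a₃ a₄ a₅ a₆ a₇ : ℝ)
    (m₁ m₂ m₃ m₄ m₅ m₆ m₇ m₈ : Matrix (Fin 3) (Fin 3) ℝ)
    (hm₁ : m₁ = !![2, 0, 0; 0, -1, 0; 0, 0, -1])
    (hm₂ : m₂ = !![0, 1, 0; -1, 0, 0; 0, 0, 0])
    (hm₃ : m₃ = !![0, 0, 1; 0, 0, 0; -1, 0, 0])
    (hm₄ : m₄ = !![0, 1, 0; 1, 0, 0; 0, 0, 0])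
    (hm₅ : m₅ = !![0, 0, 1; 0, 0, 0; 1, 0, 0])
    (hm₆ : m₆ = !![0, 0, 0; 0, -1, 0; 0, 0, 1])
    (hm₇ : m₇ = !![0, 0, 0; 0, 0, 1; 0, 1, 0])
    (hm₈ : m₈ = !![0, 0, 0; 0, 0, 1; 0, -1, 0])
    -- `c` is the projection onto `𝔪 = span(e₁,…,e₇)` along `𝔥 = span(e₈)`, followed by
    -- the identification of `𝔪` with `ℝ⁷` via the basis `e₁,…,e₇`:
    (c : Matrix (Fin 3) (Fin 3) ℝ →ₗ[ℝ] V7)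
    (hc₁ : c m₁ = bV 1) (hc₂ : c m₂ = bV 2) (hc₃ : c m₃ = bV 3) (hc₄ : c m₄ = bV 4)
    (hc₅ : c m₅ = bV 5) (hc₆ : c m₆ = bV 6) (hc₇ : c m₇ = bV 7) (hc₈ : c m₈ = 0) :
    let φ : V7 [⋀^Fin 3]→ₗ[ℝ] ℝ :=
      a₁ • eW3 1 2 3 + a₂ • eW3 1 4 5 + a₃ • eW3 1 6 7
        + a₄ • (eW3 1 2 4 + eW3 1 3 5) + a₅ • (eW3 1 2 5 - eW3 1 3 4)
        + a₆ • (eW3 2 4 6 - eW3 2 5 7 - eW3 3 4 7 - eW3 3 5 6)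
        + a₇ • (eW3 2 4 7 + eW3 2 5 6 + eW3 3 4 6 - eW3 3 5 7)
    koszul c φ m₃ m₅ m₆ m₇ = -a₃ ∧
    (koszul c φ m₃ m₅ m₆ m₇ = 0 → G2vol (bV 7) φ = 0 ∧ ¬ IsDefinite φ) := by
  intro φ
  have e123 : eW3 1 2 3 = dF ![0, 1, 2] := (eW3_eq 1 2 3).trans (dF_congr (by decide))
  have e145 : eW3 1 4 5 = dF ![0, 3, 4] := (eW3_eq 1 4 5).trans (dF_congr (by decide))
  have e167 : eW3 1 6 7 = dF ![0, 5, 6] := (eW3_eq 1 6 7).trans (dF_congr (by decide))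
  have e124 : eW3 1 2 4 = dF ![0, 1, 3] := (eW3_eq 1 2 4).trans (dF_congr (by decide))
  have e135 : eW3 1 3 5 = dF ![0, 2, 4] := (eW3_eq 1 3 5).trans (dF_congr (by decide))
  have e125 : eW3 1 2 5 = dF ![0, 1, 4] := (eW3_eq 1 2 5).trans (dF_congr (by decide))
  have e134 : eW3 1 3 4 = dF ![0, 2, 3] := (eW3_eq 1 3 4).trans (dF_congr (by decide))
  have e246 : eW3 2 4 6 = dF ![1, 3, 5] := (eW3_eq 2 4 6).trans (dF_congr (by decide))
  have e257 : eW3 2 5 7 = dF ![1, 4, 6] := (eW3_eq 2 5 7).trans (dF_congr (by decide))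
  have e347 : eW3 3 4 7 = dF ![2, 3, 6] := (eW3_eq 3 4 7).trans (dF_congr (by decide))
  have e356 : eW3 3 5 6 = dF ![2, 4, 5] := (eW3_eq 3 5 6).trans (dF_congr (by decide))
  have e247 : eW3 2 4 7 = dF ![1, 3, 6] := (eW3_eq 2 4 7).trans (dF_congr (by decide))
  have e256 : eW3 2 5 6 = dF ![1, 4, 5] := (eW3_eq 2 5 6).trans (dF_congr (by decide))
  have e346 : eW3 3 4 6 = dF ![2, 3, 5] := (eW3_eq 3 4 6).trans (dF_congr (by decide))
  have e357 : eW3 3 5 7 = dF ![2, 4, 6] := (eW3_eq 3 5 7).trans (dF_congr (by decide))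
  have hφ : φ = a₁ • dF ![0, 1, 2] + a₂ • dF ![0, 3, 4] + a₃ • dF ![0, 5, 6]
      + a₄ • (dF ![0, 1, 3] + dF ![0, 2, 4]) + a₅ • (dF ![0, 1, 4] - dF ![0, 2, 3])
      + a₆ • (dF ![1, 3, 5] - dF ![1, 4, 6] - dF ![2, 3, 6] - dF ![2, 4, 5])
      + a₇ • (dF ![1, 3, 6] + dF ![1, 4, 5] + dF ![2, 3, 5] - dF ![2, 4, 6]) := by
    show (a₁ • eW3 1 2 3 + a₂ • eW3 1 4 5 + a₃ • eW3 1 6 7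
        + a₄ • (eW3 1 2 4 + eW3 1 3 5) + a₅ • (eW3 1 2 5 - eW3 1 3 4)
        + a₆ • (eW3 2 4 6 - eW3 2 5 7 - eW3 3 4 7 - eW3 3 5 6)
        + a₇ • (eW3 2 4 7 + eW3 2 5 6 + eW3 3 4 6 - eW3 3 5 7)) = _
    rw [e123, e145, e167, e124, e135, e125, e134, e246, e257, e347, e356, e247, e256, e346, e357]
  have h35 : m₃ * m₅ - m₅ * m₃ = m₁ - m₆ := by
    rw [hm₃, hm₅, hm₁, hm₆]; ext i j; fin_cases i <;> fin_cases j <;>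
      norm_num [Matrix.mul_apply, Fin.sum_univ_succ]
  have h36 : m₃ * m₆ - m₆ * m₃ = m₅ := by
    rw [hm₃, hm₅, hm₆]; ext i j; fin_cases i <;> fin_cases j <;>
      norm_num [Matrix.mul_apply, Fin.sum_univ_succ]
  have h37 : m₃ * m₇ - m₇ * m₃ = m₄ := by
    rw [hm₃, hm₄, hm₇]; ext i j; fin_cases i <;> fin_cases j <;>
      norm_num [Matrix.mul_apply, Fin.sum_univ_succ]
  have h56 : m₅ * m₆ - m₆ * m₅ = m₃ := by
    rw [hm₃, hm₅, hm₆]; ext i j; fin_cases i <;> fin_cases j <;>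
      norm_num [Matrix.mul_apply, Fin.sum_univ_succ]
  have h57 : m₅ * m₇ - m₇ * m₅ = m₂ := by
    rw [hm₂, hm₅, hm₇]; ext i j; fin_cases i <;> fin_cases j <;>
      norm_num [Matrix.mul_apply, Fin.sum_univ_succ]
  have h67 : m₆ * m₇ - m₇ * m₆ = (-2 : ℝ) • m₈ := by
    rw [hm₆, hm₇, hm₈]; ext i j; fin_cases i <;> fin_cases j <;>
      norm_num [Matrix.mul_apply, Fin.sum_univ_succ]
  have c35 : c (m₃ * m₅ - m₅ * m₃) = bV 1 - bV 6 := by rw [h35, map_sub, hc₁, hc₆]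
  have c36 : c (m₃ * m₆ - m₆ * m₃) = bV 5 := by rw [h36, hc₅]
  have c37 : c (m₃ * m₇ - m₇ * m₃) = bV 4 := by rw [h37, hc₄]
  have c56 : c (m₅ * m₆ - m₆ * m₅) = bV 3 := by rw [h56, hc₃]
  have c57 : c (m₅ * m₇ - m₇ * m₅) = bV 2 := by rw [h57, hc₂]
  have c67 : c (m₆ * m₇ - m₇ * m₆) = 0 := by rw [h67, map_smul, hc₈, smul_zero]
  have key : koszul c φ m₃ m₅ m₆ m₇ = -a₃ := by
    rw [koszul, c35, c36, c37, c56, c57, c67, hc₃, hc₅, hc₆, hc₇, hφ]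
    simp only [AlternatingMap.add_apply, AlternatingMap.sub_apply, AlternatingMap.smul_apply,
      dF_apply, Matrix.det_fin_three, Matrix.of_apply, Matrix.cons_val_zero, Matrix.cons_val_one,
      Matrix.head_cons, Matrix.cons_val_two, Matrix.vecHead, Matrix.vecTail, Function.comp_apply,
      Fin.succ_zero_eq_one, bV, Pi.single_apply, Pi.sub_apply, Pi.zero_apply, smul_eq_mul,
      Fin.reduceEq, reduceIte, Nat.reduceSub, Fin.ofNat_eq_cast, Nat.cast_ofNat, Nat.cast_zero, Nat.cast_one]
    simp +decide
  refine ⟨key, fun h => ?_⟩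
  have ha₃ : a₃ = 0 := by
    rw [key] at h; linarith
  rw [ha₃, zero_smul, add_zero] at hφ
  have hG : G2vol (bV 7) φ = 0 := by
    rw [G2vol, hφ]
    simp only [iprod_add, iprod_sub, iprod_smul, iprod_dF, Matrix.cons_val_zero,
      Matrix.cons_val_one, Matrix.head_cons, Matrix.cons_val_two, Matrix.vecHead, Matrix.vecTail,
      Function.comp_apply, Fin.succ_zero_eq_one, bV, Pi.single_apply, Fin.reduceEq, reduceIte,
      Nat.reduceSub, Fin.ofNat_eq_cast, Nat.cast_ofNat, zero_smul, one_smul, smul_zero, add_zero, zero_add,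
      sub_zero, zero_sub]
    simp (disch := decide) only [wedge_add_left, wedge_add_right, wedge_sub_left, wedge_sub_right,
      wedge_smul_left, wedge_smul_right, wedge_zero_left, wedge_zero_right,
      wedge_neg_left, wedge_neg_right, wedge_dF, dF_eq_zero,
      smul_zero, neg_zero, sub_zero, zero_sub, add_zero, zero_add, neg_neg, sub_self, smul_neg]
  refine ⟨hG, fun hdef => ?_⟩
  have hb7 : bV 7 ≠ 0 := by
    intro h0
    have := congrFun h0 (Fin.ofNat 7 (7 - 1 : ℕ))
    rw [bV] at this
    simp at this
  exact hdef (bV 7) hb7 hG
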